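/- The complete bipartite graph K_{3,n} is Z_2×Z_2-cordial for every n ≥ 3. -/

import Mathlib

open SimpleGraph

/-- Induced edge label: the sum of the endpoint labels. -/
def edgeLabel {V A : Type*} [AddCommMonoid A] (f : V → A) : Sym2 V → A :=
  Sym2.lift ⟨fun u v => f u + f v, fun u v => add_comm (f u) (f v)⟩

/-- `f` is an `A`-cordial labeling of `G`: vertex label classes and induced
edge label classes are balanced. -/
def IsCordialLabeling {V : Type*} [Fintype V] (G : SimpleGraph V) {A : Type*} [AddCommMonoid A]
    (f : V → A) : Prop :=
  (∀ a b : A, |({v : V | f v = a}.ncard : ℤ) - ({v : V | f v = b}.ncard : ℤ)| ≤ 1) ∧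
  (∀ a b : A, |({e ∈ G.edgeSet | edgeLabel f e = a}.ncard : ℤ)
      - ({e ∈ G.edgeSet | edgeLabel f e = b}.ncard : ℤ)| ≤ 1)

/-- `G` is `A`-cordial. -/
def IsCordial {V : Type*} [Fintype V] (G : SimpleGraph V) (A : Type*) [AddCommMonoid A] : Prop :=
  ∃ f : V → A, IsCordialLabeling G f

-- auxiliary material

abbrev A4 := ZMod 2 × ZMod 2

def gfun (k : ℕ) : A4 :=
  if k % 4 = 0 then (1, 1) else if k % 4 = 1 then (0, 0) else if k % 4 = 2 then (1, 0) else (0, 1)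

def lfun (p : Fin 3) : A4 :=
  if p = 0 then (0, 0) else if p = 1 then (1, 0) else (0, 1)

def ffun (n : ℕ) : Fin 3 ⊕ Fin n → A4 := Sum.elim lfun (fun i => gfun i)

def jidx (t : A4) : ℕ :=
  if t = (1, 1) then 0 else if t = (0, 0) then 1 else if t = (1, 0) then 2 else 3

lemma jidx_lt (t : A4) : jidx t < 4 := by
  unfold jidx; split_ifs <;> omega

lemma gfun_eq_iff (t : A4) (k : ℕ) : gfun k = t ↔ k % 4 = jidx t := by
  have h : k % 4 = 0 ∨ k % 4 = 1 ∨ k % 4 = 2 ∨ k % 4 = 3 := by omega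
  have ht : ∀ s : A4, s = (0,0) ∨ s = (1,0) ∨ s = (0,1) ∨ s = (1,1) := by decide
  rcases ht t with rfl | rfl | rfl | rfl <;>
    rcases h with h | h | h | h <;>
      simp [gfun, jidx, h] <;> decide

lemma cnt_range (n j : ℕ) (hj : j < 4) :
    ((Finset.range n).filter (fun k => k % 4 = j)).card = (n + 3 - j) / 4 := by
  induction n with
  | zero => simp; omega
  | succ n ih =>
    rw [Finset.range_add_one, Finset.filter_insert]
    by_cases h : n % 4 = j
    · rw [if_pos h, Finset.card_insert_of_notMem (by simp)]
      omega
    · rw [if_neg h]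
      omega

lemma ncard_setOf {α : Type*} [Fintype α] (p : α → Prop) [DecidablePred p] :
    {x | p x}.ncard = (Finset.univ.filter p).card := by
  rw [Set.ncard_eq_toFinset_card']
  simp

lemma sum_ite_count (n : ℕ) (s t : A4) :
    (∑ i : Fin n, if s + gfun (i : ℕ) = t then 1 else 0) = (n + 3 - jidx (t - s)) / 4 := by
  rw [Fin.sum_univ_eq_sum_range (fun k => if s + gfun k = t then 1 else 0)]
  rw [← Finset.card_filter]
  have hiff : ∀ k ∈ Finset.range n, (s + gfun k = t) ↔ (k % 4 = jidx (t - s)) := by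
    intro k _
    rw [← gfun_eq_iff]
    constructor
    · intro h; rw [← h]; abel
    · intro h; rw [h]; abel
  rw [Finset.filter_congr hiff, cnt_range n _ (jidx_lt (t - s))]

lemma vcount (n : ℕ) (t : A4) :
    {v : Fin 3 ⊕ Fin n | ffun n v = t}.ncard
      = (Finset.univ.filter (fun p : Fin 3 => lfun p = t)).card + (n + 3 - jidx t) / 4 := by
  rw [ncard_setOf, Finset.card_filter, Fintype.sum_sum_type, ← Finset.card_filter]
  congr 1
  have : (∑ i : Fin n, if ffun n (Sum.inr i) = t then 1 else 0)
      = ∑ i : Fin n, if (0 : A4) + gfun (i : ℕ) = t then 1 else 0 := by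
    simp only [ffun, Sum.elim_inr, zero_add]
    congr
  rw [this, sum_ite_count, sub_zero]

@[simp] lemma edgeLabel_mk {V A : Type*} [AddCommMonoid A] (f : V → A) (u v : V) :
    edgeLabel f s(u, v) = f u + f v := rfl

lemma phi_inj (n : ℕ) :
    Function.Injective (fun x : Fin 3 × Fin n => s(Sum.inl x.1, Sum.inr x.2)) := by
  rintro ⟨p, i⟩ ⟨q, j⟩ h
  simp only [Sym2.eq_iff] at h
  rcases h with ⟨h1, h2⟩ | ⟨h1, h2⟩
  · simp_all
  · exact absurd h1 (by simp)

lemma edge_set_image (n : ℕ) (t : A4) :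
    {e ∈ (completeBipartiteGraph (Fin 3) (Fin n)).edgeSet | edgeLabel (ffun n) e = t}
      = (fun x : Fin 3 × Fin n => s(Sum.inl x.1, Sum.inr x.2)) ''
        {x : Fin 3 × Fin n | lfun x.1 + gfun (x.2 : ℕ) = t} := by
  ext e
  induction e using Sym2.ind with
  | _ u v =>
    constructor
    · rintro ⟨hadj, hlab⟩
      rw [SimpleGraph.mem_edgeSet] at hadj
      rcases u with p | i <;> rcases v with q | j
      · simp at hadj
      · exact ⟨(p, j), by simpa [ffun] using hlab, rfl⟩
      · refine ⟨(q, i), ?_, Sym2.eq_swap⟩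
        simpa [ffun, add_comm] using hlab
      · simp at hadj
    · rintro ⟨⟨p, j⟩, hx, he⟩
      rw [← he]
      refine ⟨?_, ?_⟩
      · simp [SimpleGraph.mem_edgeSet]
      · simpa [ffun] using hx

lemma ecount (n : ℕ) (t : A4) :
    {e ∈ (completeBipartiteGraph (Fin 3) (Fin n)).edgeSet | edgeLabel (ffun n) e = t}.ncard
      = (n + 3 - jidx (t - lfun 0)) / 4 + (n + 3 - jidx (t - lfun 1)) / 4
        + (n + 3 - jidx (t - lfun 2)) / 4 := by
  rw [edge_set_image, Set.ncard_image_of_injective _ (phi_inj n), ncard_setOf,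
    Finset.card_filter, Fintype.sum_prod_type, Fin.sum_univ_three]
  simp only [sum_ite_count]

lemma vfacts : ∀ t : A4, jidx t < 4 ∧
    ((jidx t = 0 ∧ (Finset.univ.filter (fun p : Fin 3 => lfun p = t)).card = 0) ∨
     (jidx t ≠ 0 ∧ (Finset.univ.filter (fun p : Fin 3 => lfun p = t)).card = 1)) := by
  decide

lemma efacts : ∀ t : A4,
    jidx (t - lfun 0) < 4 ∧ jidx (t - lfun 1) < 4 ∧ jidx (t - lfun 2) < 4 ∧
    jidx (t - (1, 1)) < 4 ∧
    jidx (t - lfun 0) ≠ jidx (t - lfun 1) ∧ jidx (t - lfun 0) ≠ jidx (t - lfun 2) ∧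
    jidx (t - lfun 0) ≠ jidx (t - (1, 1)) ∧ jidx (t - lfun 1) ≠ jidx (t - lfun 2) ∧
    jidx (t - lfun 1) ≠ jidx (t - (1, 1)) ∧ jidx (t - lfun 2) ≠ jidx (t - (1, 1)) := by
  decide

lemma edgeKey (n : ℕ) (t : A4) : ∃ j : ℕ, j < 4 ∧
    {e ∈ (completeBipartiteGraph (Fin 3) (Fin n)).edgeSet | edgeLabel (ffun n) e = t}.ncard
      + (n + 3 - j) / 4 = n := by
  refine ⟨jidx (t - (1, 1)), (efacts t).2.2.2.1, ?_⟩
  rw [ecount]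
  obtain ⟨h0, h1, h2, h3, d01, d02, d03, d12, d13, d23⟩ := efacts t
  omega

theorem stmt_14 : ∀ n : ℕ, 3 ≤ n →
    IsCordial (completeBipartiteGraph (Fin 3) (Fin n)) (ZMod 2 × ZMod 2) := by
  intro n _
  refine ⟨ffun n, ?_, ?_⟩
  · intro a b
    rw [vcount n a, vcount n b]
    obtain ⟨ha, ha'⟩ := vfacts a
    obtain ⟨hb, hb'⟩ := vfacts b
    rw [abs_sub_le_iff]
    constructor <;> omega
  · intro a b
    obtain ⟨ja, hja, ha⟩ := edgeKey n a
    obtain ⟨jb, hjb, hb⟩ := edgeKey n b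
    rw [abs_sub_le_iff]
    constructor <;> omega
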